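/- Let KG be a σ-normal group ring of a non-Abelian group G, and suppose the subgroup H generated by W = {w ∈ G | σ(w) ≠ w} is Abelian. Then H has index 2 in G, G = ⟨H, b⟩ for some b with σ(b) = b, f(b) = -1, f(h) = 1 for all h ∈ H, and σ(h) = b⁻¹hb = bhb⁻¹ for all h ∈ H. -/

import Mathlib

noncomputable def sigmaMap {K G : Type*} [CommRing K] [Group G] (σ : G → G) (f : G →* Kˣ)
    (x : MonoidAlgebra K G) : MonoidAlgebra K G :=
  Finsupp.sum x.coeff fun g a => MonoidAlgebra.single (σ g) (a * (f g : K))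

lemma sigmaMap_pair {K G : Type*} [CommRing K] [Group G] (σ : G → G) (f : G →* Kˣ)
    (u v : G) (a c : K) :
    sigmaMap σ f (MonoidAlgebra.single u a + MonoidAlgebra.single v c)
      = MonoidAlgebra.single (σ u) (a * (f u : K))
        + MonoidAlgebra.single (σ v) (c * (f v : K)) := by
  unfold sigmaMap
  rw [MonoidAlgebra.coeff_add, MonoidAlgebra.coeff_single, MonoidAlgebra.coeff_single,
    Finsupp.sum_add_index' (fun g => by simp)
      (fun g b₁ b₂ => by rw [add_mul]; exact MonoidAlgebra.single_add _ _ _),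
    Finsupp.sum_single_index (by simp), Finsupp.sum_single_index (by simp)]

theorem stmt_6 {K G : Type*} [CommRing K] [Group G] (σ : G → G) (f : G →* Kˣ)
    (hanti : ∀ g h : G, σ (g * h) = σ h * σ g)
    (hord : ∀ g : G, σ (σ g) = g)
    (hinvol : ∀ g : G, f (g * σ g) = 1)
    (hnorm : ∀ x : MonoidAlgebra K G, x * sigmaMap σ f x = sigmaMap σ f x * x)
    (hG : ∃ g h : G, g * h ≠ h * g)
    (hHab : ∀ x ∈ Subgroup.closure {w : G | σ w ≠ w},
      ∀ y ∈ Subgroup.closure {w : G | σ w ≠ w}, x * y = y * x) :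
    (Subgroup.closure {w : G | σ w ≠ w}).index = 2 ∧
    ∃ b : G, Subgroup.closure {w : G | σ w ≠ w} ⊔ Subgroup.closure {b} = ⊤ ∧
      σ b = b ∧ f b = -1 ∧
      ∀ h ∈ Subgroup.closure {w : G | σ w ≠ w},
        f h = 1 ∧ σ h = b⁻¹ * h * b ∧ σ h = b * h * b⁻¹ := by
  set H := Subgroup.closure {w : G | σ w ≠ w} with hH
  -- W is nonempty
  obtain ⟨w0, hw0⟩ : ∃ w : G, σ w ≠ w := by
    by_contra h
    push_neg at h
    obtain ⟨g, k, hgk⟩ := hG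
    exact hgk (by rw [← h (g * k), hanti, h g, h k])
  have hw0H : w0 ∈ H := Subgroup.subset_closure hw0
  -- there is an element outside H
  obtain ⟨b, hb⟩ : ∃ b : G, b ∉ H := by
    by_contra h
    push_neg at h
    obtain ⟨g, k, hgk⟩ := hG
    exact hgk (hHab g (h g) k (h k))
  -- σ fixes everything outside H
  have hfix : ∀ g : G, g ∉ H → σ g = g := by
    intro g hg
    by_contra h
    exact hg (Subgroup.subset_closure h)
  have hmul_not : ∀ h ∈ H, ∀ c : G, c ∉ H → (h * c ∉ H ∧ c * h ∉ H) := by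
    intro h hh c hc
    constructor
    · intro hin
      exact hc (by simpa using mul_mem (inv_mem hh) hin)
    · intro hin
      exact hc (by simpa using mul_mem hin (inv_mem hh))
  have hconj1 : ∀ h ∈ H, ∀ c : G, c ∉ H → σ h * c = c * h := by
    intro h hh c hc
    have h1 : σ (c * h) = c * h := hfix _ (hmul_not h hh c hc).2
    rw [hanti, hfix c hc] at h1
    exact h1
  have hconj2 : ∀ h ∈ H, ∀ c : G, c ∉ H → c * σ h = h * c := by
    intro h hh c hc
    have h1 : σ (h * c) = h * c := hfix _ (hmul_not h hh c hc).1
    rw [hanti, hfix c hc] at h1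
    exact h1
  -- product of two elements outside H is in H
  have hprod : ∀ u : G, u ∉ H → ∀ v : G, v ∉ H → u * v ∈ H := by
    intro u hu v hv
    by_contra huv
    have e1 : σ w0 * (u * v) = (u * v) * w0 := hconj1 w0 hw0H (u * v) huv
    have e2 : σ w0 * v = v * w0 := hconj1 w0 hw0H v hv
    have e3 : u * σ w0 = w0 * u := hconj2 w0 hw0H u hu
    have e4 : σ w0 * u = w0 * u := by
      apply mul_right_cancel (b := v)
      calc σ w0 * u * v = σ w0 * (u * v) := by rw [mul_assoc]
        _ = u * (v * w0) := by rw [e1, mul_assoc]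
        _ = u * (σ w0 * v) := by rw [e2]
        _ = (u * σ w0) * v := by rw [mul_assoc]
        _ = w0 * u * v := by rw [e3]
    exact hw0 (mul_right_cancel e4)
  have hσb : σ b = b := hfix b hb
  -- the two group-algebra computations
  have comp : ∀ w : G, σ w ≠ w → ((f b : K) + (f w : K) = 0 ∧ (f w : K) * ((f b : K) + 1) = 0) := by
    intro w hw
    have hwH : w ∈ H := Subgroup.subset_closure hw
    have hσw_ne : σ (σ w) ≠ σ w := by rw [hord]; exact fun e => hw e.symm
    have hσwH : σ w ∈ H := Subgroup.subset_closure hσw_ne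
    have hwbn : w * b ∉ H := (hmul_not w hwH b hb).1
    have r1 : b * σ w = w * b := hconj2 w hwH b hb
    have r2 : b * w = σ w * b := (hconj1 w hwH b hb).symm
    constructor
    · -- test element b + w
      have E := hnorm (MonoidAlgebra.single b (1 : K) + MonoidAlgebra.single w 1)
      rw [sigmaMap_pair, hσb] at E
      simp only [one_mul, add_mul, mul_add, MonoidAlgebra.single_mul_single, one_mul,
        mul_one] at E
      rw [r1, r2] at E
      have hc := Finsupp.ext_iff.mp (congrArg MonoidAlgebra.coeff E) (w * b)
      simp only [MonoidAlgebra.coeff_add, MonoidAlgebra.coeff_single] at hc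
      have d1 : b * b ≠ w * b := by
        intro h; exact hwbn (h ▸ hprod b hb b hb)
      have d2 : w * σ w ≠ w * b := by
        intro h; exact hwbn (h ▸ mul_mem hwH hσwH)
      have d3 : σ w * b ≠ w * b := fun h => hw (mul_right_cancel h)
      have d4 : σ w * w ≠ w * b := by
        intro h; exact hwbn (h ▸ mul_mem hσwH hwH)
      rw [Finsupp.add_apply, Finsupp.add_apply, Finsupp.add_apply, Finsupp.add_apply,
        Finsupp.add_apply, Finsupp.add_apply, Finsupp.single_eq_of_ne d1.symm,
        Finsupp.single_eq_of_ne d2.symm, Finsupp.single_eq_of_ne d3.symm, Finsupp.single_eq_of_ne d4.symm,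
        Finsupp.single_eq_same, Finsupp.single_eq_same, Finsupp.single_eq_of_ne d3.symm] at hc
      linear_combination hc
    · -- test element w + w*b
      have hσwb : σ (w * b) = w * b := hfix _ hwbn
      have E := hnorm (MonoidAlgebra.single w (1 : K) + MonoidAlgebra.single (w * b) 1)
      rw [sigmaMap_pair, hσwb] at E
      have hfwb : ((f (w * b) : Kˣ) : K) = (f w : K) * (f b : K) := by
        rw [map_mul]; push_cast; ring
      rw [hfwb] at E
      simp only [one_mul, add_mul, mul_add, MonoidAlgebra.single_mul_single, one_mul,
        mul_one] at E
      have r3 : (w * b) * σ w = w * (w * b) := by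
        rw [mul_assoc, r1, ← mul_assoc]
      have r4 : (w * b) * w = w * (σ w * b) := by
        rw [← r2, mul_assoc]
      rw [r3, r4] at E
      have hc := Finsupp.ext_iff.mp (congrArg MonoidAlgebra.coeff E) (w * (w * b))
      simp only [MonoidAlgebra.coeff_add, MonoidAlgebra.coeff_single] at hc
      have hwwbn : w * (w * b) ∉ H := (hmul_not w hwH (w * b) hwbn).1
      have d1 : w * σ w ≠ w * (w * b) := by
        intro h; exact hwwbn (h ▸ mul_mem hwH hσwH)
      have d2 : (w * b) * (w * b) ≠ w * (w * b) := by
        intro h; exact hwwbn (h ▸ hprod _ hwbn _ hwbn)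
      have d3 : σ w * w ≠ w * (w * b) := by
        intro h; exact hwwbn (h ▸ mul_mem hσwH hwH)
      have d4 : σ w * (w * b) ≠ w * (w * b) := fun h => hw (mul_right_cancel h)
      have d5 : w * (σ w * b) ≠ w * (w * b) := by
        intro h
        exact hw (mul_right_cancel (mul_left_cancel h))
      rw [Finsupp.add_apply, Finsupp.add_apply, Finsupp.add_apply, Finsupp.add_apply,
        Finsupp.add_apply, Finsupp.add_apply, Finsupp.single_eq_of_ne d1.symm,
        Finsupp.single_eq_of_ne d2.symm, Finsupp.single_eq_of_ne d3.symm, Finsupp.single_eq_of_ne d4.symm,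
        Finsupp.single_eq_of_ne d5.symm, Finsupp.single_eq_same, Finsupp.single_eq_same] at hc
      linear_combination hc
  have hfb : (f b : K) = -1 := by
    obtain ⟨h1, h2⟩ := comp w0 hw0
    have h3 : (f b : K) + 1 = 0 := (Units.mul_right_eq_zero (f w0)).mp h2
    linear_combination h3
  have hfw : ∀ w : G, σ w ≠ w → (f w : K) = 1 := by
    intro w hw
    have h1 := (comp w hw).1
    rw [hfb] at h1
    linear_combination h1
  have hfH : ∀ h ∈ H, f h = 1 := by
    intro h hh
    induction hh using Subgroup.closure_induction with
    | mem g hg => exact Units.ext (by rw [hfw g hg]; simp)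
    | one => exact map_one f
    | mul x y _ _ hx hy => rw [map_mul, hx, hy, one_mul]
    | inv x _ hx => rw [map_inv, hx, inv_one]
  have hbH2 : ∀ g : G, g ∉ H → g * b ∈ H := fun g hg => hprod g hg b hb
  constructor
  · rw [Subgroup.index_eq_two_iff]
    refine ⟨b, fun g => ?_⟩
    by_cases hg : g ∈ H
    · exact Or.inr ⟨hg, (hmul_not g hg b hb).1⟩
    · exact Or.inl ⟨hbH2 g hg, hg⟩
  · refine ⟨b, ?_, hσb, Units.ext (by rw [hfb]; simp), ?_⟩
    · rw [eq_top_iff]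
      intro g _
      by_cases hg : g ∈ H
      · exact Subgroup.mem_sup_left hg
      · have h1 : g * b ∈ H := hbH2 g hg
        have h2 : g = (g * b) * b⁻¹ := by group
        rw [h2]
        exact mul_mem (Subgroup.mem_sup_left h1)
          (Subgroup.mem_sup_right (inv_mem (Subgroup.subset_closure rfl)))
    · intro h hh
      refine ⟨hfH h hh, ?_, ?_⟩
      · have e := hconj2 h hh b hb
        calc σ h = b⁻¹ * (b * σ h) := by group
          _ = b⁻¹ * (h * b) := by rw [e]
          _ = b⁻¹ * h * b := by group
      · have e := hconj1 h hh b hb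
        calc σ h = (σ h * b) * b⁻¹ := by group
          _ = (b * h) * b⁻¹ := by rw [e]
          _ = b * h * b⁻¹ := by group
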